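/- For every real number x ≠ 0, x·coth(x) ≤ 1 + x²/3. Equivalently, for every x > 0, 3x ≤ (3 + x²)·tanh(x). -/

import Mathlib

open Real

/-- Hyperbolic cotangent. -/
noncomputable def coth (x : ℝ) : ℝ := Real.cosh x / Real.sinh x

lemma sinh_le_mul_cosh : ∀ x : ℝ, 0 ≤ x → Real.sinh x ≤ x * Real.cosh x := by
  have hd : ∀ y : ℝ, HasDerivAt (fun x : ℝ => x * Real.cosh x - Real.sinh x)
      (y * Real.sinh y) y := by
    intro y
    have h := ((hasDerivAt_id y).mul (Real.hasDerivAt_cosh y)).sub (Real.hasDerivAt_sinh y)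
    refine h.congr_deriv ?_
    simp
  have hmono : MonotoneOn (fun x : ℝ => x * Real.cosh x - Real.sinh x) (Set.Ici 0) := by
    apply monotoneOn_of_deriv_nonneg (convex_Ici 0)
    · exact (Continuous.sub (continuous_id.mul Real.continuous_cosh)
        Real.continuous_sinh).continuousOn
    · intro y hy
      exact ((hd y).differentiableAt).differentiableWithinAt
    · intro y hy
      rw [(hd y).deriv]
      rw [interior_Ici] at hy
      exact mul_nonneg (le_of_lt hy) (Real.sinh_nonneg_iff.mpr (le_of_lt hy))
  intro x hx
  have := hmono (Set.self_mem_Ici) (Set.mem_Ici.mpr hx) hx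
  simp at this
  linarith

lemma key : ∀ x : ℝ, 0 ≤ x → 3 * x * Real.cosh x ≤ (3 + x ^ 2) * Real.sinh x := by
  have hd : ∀ y : ℝ, HasDerivAt (fun x : ℝ => (3 + x ^ 2) * Real.sinh x - 3 * x * Real.cosh x)
      (y * (y * Real.cosh y - Real.sinh y)) y := by
    intro y
    have h1 : HasDerivAt (fun x : ℝ => (3 + x ^ 2)) (2 * y) y := by
      simpa using (hasDerivAt_pow 2 y).const_add 3
    have h2 : HasDerivAt (fun x : ℝ => 3 * x) 3 y := by
      simpa using (hasDerivAt_id y).const_mul 3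
    have h := (h1.mul (Real.hasDerivAt_sinh y)).sub (h2.mul (Real.hasDerivAt_cosh y))
    refine h.congr_deriv ?_
    ring
  have hmono : MonotoneOn
      (fun x : ℝ => (3 + x ^ 2) * Real.sinh x - 3 * x * Real.cosh x) (Set.Ici 0) := by
    apply monotoneOn_of_deriv_nonneg (convex_Ici 0)
    · exact (Continuous.sub ((continuous_const.add (continuous_pow 2)).mul Real.continuous_sinh)
        ((continuous_const.mul continuous_id).mul Real.continuous_cosh)).continuousOn
    · intro y hy
      exact ((hd y).differentiableAt).differentiableWithinAt
    · intro y hy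
      rw [(hd y).deriv]
      rw [interior_Ici] at hy
      have h1 := sinh_le_mul_cosh y (le_of_lt hy)
      have h2 := mul_nonneg (le_of_lt (Set.mem_Ioi.mp hy)) (sub_nonneg.mpr h1)
      nlinarith
  intro x hx
  have := hmono (Set.self_mem_Ici) (Set.mem_Ici.mpr hx) hx
  simp at this
  linarith

/-- For every x ≠ 0, x·coth x ≤ 1 + x²/3; equivalently, for every x > 0,
    3x ≤ (3 + x²)·tanh x. -/
theorem stmt1 :
    (∀ x : ℝ, x ≠ 0 → x * coth x ≤ 1 + x ^ 2 / 3) ∧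
      (∀ x : ℝ, 0 < x → 3 * x ≤ (3 + x ^ 2) * Real.tanh x) := by
  constructor
  · intro x hx
    have main : ∀ y : ℝ, 0 < y → y * coth y ≤ 1 + y ^ 2 / 3 := by
      intro y hy
      have hs : 0 < Real.sinh y := Real.sinh_pos_iff.mpr hy
      have heq : y * coth y = (y * Real.cosh y) / Real.sinh y := by rw [coth]; ring
      rw [heq, div_le_iff₀ hs]
      have := key y (le_of_lt hy)
      nlinarith
    rcases lt_or_gt_of_ne hx with h | h
    · have := main (-x) (by linarith)
      rw [coth] at this ⊢
      simp only [Real.sinh_neg, Real.cosh_neg] at this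
      have h2 : (-x) * (Real.cosh x / -Real.sinh x) = x * (Real.cosh x / Real.sinh x) := by
        field_simp
      rw [h2] at this
      simpa using this
    · exact main x h
  · intro x hx
    have hc : 0 < Real.cosh x := Real.cosh_pos x
    have heq : (3 + x ^ 2) * Real.tanh x = ((3 + x ^ 2) * Real.sinh x) / Real.cosh x := by
      rw [Real.tanh_eq_sinh_div_cosh]; ring
    rw [heq, le_div_iff₀ hc]
    have := key x (le_of_lt hx)
    linarith
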